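/- arXiv:2001.07011 — 6 statements merged into one kernel-verified Lean document; each statement's English description precedes it below -/
import Mathlib

section
/- Let T be a positive integer and let x : Fin T → ℝ be nonnegative with ∑_{t=1}^T x_t = 1. For γ ∈ (0,1], define t^γ := min { t ∈ [T] : ∑_{s=1}^t x_s ≥ γ } (the γ-point). Then the integral ∫_0^1 t^γ dγ is at most ∑_{t=1}^T t · x_t. -/
open MeasureTheory

/-- The α-point integral bound: if `x` is a nonnegative fractional assignment of one unit
of a job to time slots `1,…,T` and `tp γ` is the γ-point (the least `t ∈ [T]` with
`∑_{s=1}^t x_s ≥ γ`), then `∫_0^1 tp γ dγ ≤ ∑_{t=1}^T t · x_t`. -/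
theorem stmt_0 (T : ℕ) (hT : 0 < T) (x : ℕ → ℝ)
    (hx : ∀ t, 0 ≤ x t)
    (hsum : ∑ t ∈ Finset.Icc 1 T, x t = 1)
    (tp : ℝ → ℕ)
    (htp : ∀ γ ∈ Set.Ioc (0:ℝ) 1,
      IsLeast {t | t ∈ Finset.Icc 1 T ∧ γ ≤ ∑ s ∈ Finset.Icc 1 t, x s} (tp γ)) :
    ∫ γ in Set.Ioc (0:ℝ) 1, (tp γ : ℝ) ≤ ∑ t ∈ Finset.Icc 1 T, (t : ℝ) * x t := by
  set S : ℕ → ℝ := fun t => ∑ s ∈ Finset.Icc 1 t, x s with hS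
  have hSmono : Monotone S := by
    intro a b hab
    exact Finset.sum_le_sum_of_subset_of_nonneg
      (Finset.Icc_subset_Icc le_rfl hab) (fun i _ _ => hx i)
  have hS0 : S 0 = 0 := by simp [hS]
  have hST : S T = 1 := hsum
  have hSnn : ∀ t, 0 ≤ S t := fun t => hS0 ▸ hSmono (Nat.zero_le t)
  have hSle1 : ∀ t, t ≤ T → S t ≤ 1 := fun t ht => hST ▸ hSmono ht
  -- key pointwise identity
  have key : ∀ γ ∈ Set.Ioc (0:ℝ) 1,
      (tp γ : ℝ) = ∑ t ∈ Finset.range T, (Set.Ioi (S t)).indicator (fun _ => (1:ℝ)) γ := by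
    intro γ hγ
    obtain ⟨⟨htpmem, htpge⟩, htplb⟩ := htp γ hγ
    simp only [Finset.mem_Icc] at htpmem
    have hiff : ∀ t ∈ Finset.range T, (S t < γ ↔ t < tp γ) := by
      intro t ht
      simp only [Finset.mem_range] at ht
      constructor
      · intro h
        by_contra hc
        push_neg at hc
        exact absurd (le_trans htpge (hSmono hc)) (not_le.2 h)
      · intro h
        by_contra hc
        push_neg at hc
        rcases Nat.eq_zero_or_pos t with h0 | h0
        · rw [h0, hS0] at hc; exact absurd hγ.1 (not_lt.2 hc)
        · have : tp γ ≤ t := htplb ⟨Finset.mem_Icc.2 ⟨h0, le_of_lt ht⟩, hc⟩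
          omega
    have : ∑ t ∈ Finset.range T, (Set.Ioi (S t)).indicator (fun _ => (1:ℝ)) γ
        = ∑ t ∈ Finset.range T, if t < tp γ then (1:ℝ) else 0 := by
      refine Finset.sum_congr rfl fun t ht => ?_
      by_cases h : S t < γ
      · simp [Set.indicator_apply, Set.mem_Ioi, h, (hiff t ht).1 h]
      · rw [Set.indicator_apply, if_neg (by simpa using h), if_neg (fun hlt => h ((hiff t ht).2 hlt))]
    rw [this, Finset.sum_boole]
    have hfil : (Finset.range T).filter (fun t => t < tp γ) = Finset.range (tp γ) := by
      ext t; simp only [Finset.mem_filter, Finset.mem_range]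
      constructor
      · rintro ⟨_, h⟩; exact h
      · intro h; exact ⟨lt_of_lt_of_le h htpmem.2, h⟩
    rw [hfil]
    simp
  -- rewrite the integral
  have hmeas : MeasurableSet (Set.Ioc (0:ℝ) 1) := measurableSet_Ioc
  rw [setIntegral_congr_fun hmeas (fun γ hγ => key γ hγ)]
  have hint : ∀ t ∈ Finset.range T,
      IntegrableOn ((Set.Ioi (S t)).indicator (fun _ => (1:ℝ))) (Set.Ioc (0:ℝ) 1) := by
    intro t _
    exact (integrableOn_const measure_Ioc_lt_top.ne).indicator measurableSet_Ioi
  rw [integral_finset_sum _ hint]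
  have hval : ∀ t ∈ Finset.range T,
      ∫ γ in Set.Ioc (0:ℝ) 1, (Set.Ioi (S t)).indicator (fun _ => (1:ℝ)) γ = 1 - S t := by
    intro t ht
    simp only [Finset.mem_range] at ht
    rw [integral_indicator measurableSet_Ioi, Measure.restrict_restrict measurableSet_Ioi]
    have hset : Set.Ioi (S t) ∩ Set.Ioc (0:ℝ) 1 = Set.Ioc (S t) 1 := by
      ext y
      simp only [Set.mem_inter_iff, Set.mem_Ioi, Set.mem_Ioc]
      constructor
      · rintro ⟨h1, _, h3⟩; exact ⟨h1, h3⟩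
      · rintro ⟨h1, h2⟩; exact ⟨h1, lt_of_le_of_lt (hSnn t) h1, h2⟩
    rw [hset, setIntegral_const, Real.volume_real_Ioc_of_le (hSle1 t (le_of_lt ht)), smul_eq_mul,
      mul_one]
  rw [Finset.sum_congr rfl hval]
  -- final algebraic identity
  have : ∑ t ∈ Finset.range T, (1 - S t) = ∑ t ∈ Finset.Icc 1 T, (t : ℝ) * x t := by
    have h1 : ∀ t ∈ Finset.range T, (1 : ℝ) - S t = ∑ s ∈ Finset.Ioc t T, x s := by
      intro t ht
      simp only [Finset.mem_range] at ht
      have hcons := Finset.sum_Ioc_consecutive x (Nat.zero_le t) (le_of_lt ht)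
      have hIcc : ∀ n, Finset.Icc 1 n = Finset.Ioc 0 n := fun n => by
        ext i; simp [Nat.lt_iff_add_one_le]
      have hsum' : ∑ s ∈ Finset.Ioc 0 T, x s = 1 := by rw [← hIcc]; exact hsum
      rw [hS]
      simp only [hIcc]
      linarith [hcons, hsum']
    rw [Finset.sum_congr rfl h1]
    rw [Finset.sum_comm' (s := Finset.range T) (t := fun t => Finset.Ioc t T)
      (t' := Finset.Icc 1 T) (s' := fun s => Finset.range s)]
    · refine Finset.sum_congr rfl fun s hs => ?_
      rw [Finset.sum_const, Finset.card_range, nsmul_eq_mul]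
    · intro t s
      simp only [Finset.mem_range, Finset.mem_Ioc, Finset.mem_Icc]
      omega
  linarith [this.le, this.ge]
end

section
/- Consider the all-but-one MSSC instance with jobs A = {a_1,...,a_n} and B = {b_1,...,b_n} (n even), where each b_i has predecessor set A \ {a_i} and covering requirement n−2, with p_a = 1, w_a = 0 for a ∈ A and p_b = 0, w_b = 1 for b ∈ B. The optimal schedule value is (n−2)(n+1): scheduling A in any order so that a_i completes at time i, then b_{n-1}, b_n complete at time n−2 and all other b_i complete at time n−1, and no feasible schedule achieves a smaller total weighted completion time. -/
open scoped Classical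

/-- Completion time of job `b_i` in the all-but-one MSSC instance, given that the jobs of
`A` are scheduled according to the permutation `σ` (job `a_j` completes at time `σ j + 1`):
the first time `t` by which `n - 2` jobs of `A \ {a_i}` have completed. -/
noncomputable def abmCost (n : ℕ) (σ : Equiv.Perm (Fin n)) (i : Fin n) : ℕ :=
  sInf {t : ℕ |
    n - 2 ≤ (Finset.univ.filter (fun j : Fin n => j ≠ i ∧ (σ j : ℕ) + 1 ≤ t)).card}

lemma count_key (n t : ℕ) :
    (Finset.univ.filter (fun m : Fin n => (m : ℕ) < t)).card = min t n := by
  rw [← Finset.card_range (min t n)]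
  refine Finset.card_bij (fun m _ => (m : ℕ)) ?_ ?_ ?_
  · intro a ha
    simp only [Finset.mem_filter, Finset.mem_univ, true_and] at ha
    simp only [Finset.mem_range, lt_min_iff]
    exact ⟨ha, a.isLt⟩
  · intro a _ b _ h; exact Fin.val_injective h
  · intro b hb
    simp only [Finset.mem_range, lt_min_iff] at hb
    exact ⟨⟨b, hb.2⟩, by simp [hb.1], rfl⟩

lemma count_perm (n t : ℕ) (σ : Equiv.Perm (Fin n)) :
    (Finset.univ.filter (fun j : Fin n => (σ j : ℕ) + 1 ≤ t)).card = min t n := by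
  rw [← count_key n t]
  refine Finset.card_bij (fun j _ => σ j) ?_ ?_ ?_
  · intro a ha
    simp only [Finset.mem_filter, Finset.mem_univ, true_and] at ha ⊢
    omega
  · intro a _ b _ h; exact σ.injective h
  · intro b hb
    simp only [Finset.mem_filter, Finset.mem_univ, true_and] at hb ⊢
    exact ⟨σ.symm b, by simp; omega, by simp⟩

lemma count_ne (n t : ℕ) (σ : Equiv.Perm (Fin n)) (i : Fin n) :
    (Finset.univ.filter (fun j : Fin n => j ≠ i ∧ (σ j : ℕ) + 1 ≤ t)).card
      = min t n - (if (σ i : ℕ) + 1 ≤ t then 1 else 0) := by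
  have h1 : Finset.univ.filter (fun j : Fin n => j ≠ i ∧ (σ j : ℕ) + 1 ≤ t)
      = (Finset.univ.filter (fun j : Fin n => (σ j : ℕ) + 1 ≤ t)).erase i := by
    ext j
    simp [Finset.mem_erase, and_comm]
  rw [h1]
  by_cases h : (σ i : ℕ) + 1 ≤ t
  · rw [Finset.card_erase_of_mem (by simp [h]; omega), count_perm, if_pos h]
  · rw [Finset.erase_eq_of_notMem (by simp [h]; omega), count_perm, if_neg h]; omega

lemma abmCost_eq (n : ℕ) (σ : Equiv.Perm (Fin n)) (i : Fin n) (hn2 : 2 ≤ n) :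
    abmCost n σ i = if n - 2 ≤ (σ i : ℕ) then n - 2 else n - 1 := by
  have hσi := (σ i).isLt
  unfold abmCost
  split_ifs with h
  · apply le_antisymm
    · apply Nat.sInf_le
      simp only [Set.mem_setOf_eq, count_ne]
      have : ¬ ((σ i : ℕ) + 1 ≤ n - 2) := by omega
      rw [if_neg this]
      omega
    · apply le_csInf
      · exact ⟨n - 2, by simp only [Set.mem_setOf_eq, count_ne]; rw [if_neg (by omega)]; omega⟩
      · intro t ht
        simp only [Set.mem_setOf_eq, count_ne] at ht
        split_ifs at ht <;> omega
  · apply le_antisymm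
    · apply Nat.sInf_le
      simp only [Set.mem_setOf_eq, count_ne]
      rw [if_pos (by omega)]
      omega
    · apply le_csInf
      · exact ⟨n - 1, by simp only [Set.mem_setOf_eq, count_ne]; rw [if_pos (by omega)]; omega⟩
      · intro t ht
        simp only [Set.mem_setOf_eq, count_ne] at ht
        split_ifs at ht <;> omega

lemma abm_sum (n : ℕ) (σ : Equiv.Perm (Fin n)) (hn2 : 2 ≤ n) :
    ∑ i : Fin n, abmCost n σ i = (n - 2) * (n + 1) := by
  have h1 : ∑ i : Fin n, abmCost n σ i
      = ∑ i : Fin n, (if n - 2 ≤ (σ i : ℕ) then n - 2 else n - 1) := by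
    exact Finset.sum_congr rfl fun i _ => abmCost_eq n σ i hn2
  rw [h1, Equiv.sum_comp σ (fun k : Fin n => if n - 2 ≤ (k : ℕ) then n - 2 else n - 1)]
  rw [Finset.sum_ite, Finset.sum_const, Finset.sum_const]
  have hc1 : (Finset.univ.filter (fun k : Fin n => ¬ n - 2 ≤ (k : ℕ))).card = n - 2 := by
    have : (Finset.univ.filter (fun k : Fin n => ¬ n - 2 ≤ (k : ℕ)))
        = (Finset.univ.filter (fun k : Fin n => (k : ℕ) < n - 2)) := by
      apply Finset.filter_congr; intro k _; simp; omega
    rw [this, count_key]; omega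
  have hc2 : (Finset.univ.filter (fun k : Fin n => n - 2 ≤ (k : ℕ))).card = 2 := by
    have := Finset.card_filter_add_card_filter_not
      (s := (Finset.univ : Finset (Fin n))) (p := fun k : Fin n => n - 2 ≤ (k : ℕ))
    rw [hc1] at this
    simp only [Finset.card_univ, Fintype.card_fin] at this
    omega
  rw [hc1, hc2]
  have : n - 1 = n - 2 + 1 := by omega
  rw [this]; ring_nf
  obtain ⟨m, rfl⟩ : ∃ m, n = m + 2 := ⟨n - 2, by omega⟩
  simp; ring

/-- The optimal value of the all-but-one MSSC instance with `A = {a_1,…,a_n}`,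
`B = {b_1,…,b_n}` (n even), predecessors of `b_i` being `A \ {a_i}` with covering
requirement `n − 2`, is exactly `(n − 2)(n + 1)`. -/
theorem stmt_3 (n : ℕ) (hn : Even n) (hn2 : 2 ≤ n) :
    IsLeast {v : ℕ | ∃ σ : Equiv.Perm (Fin n), v = ∑ i : Fin n, abmCost n σ i}
      ((n - 2) * (n + 1)) := by
  constructor
  · exact ⟨Equiv.refl _, (abm_sum n _ hn2).symm⟩
  · rintro v ⟨σ, rfl⟩
    rw [abm_sum n σ hn2]
end

section
/- Consider the bipartite OR-precedence scheduling instance with m triples {i_q, k_q, j_q}, q = 1,...,m, where p_{i_q} = p_{k_q} = 1, p_{j_q} = 0, w_{i_q} = w_{k_q} = 0, w_{j_q} = 1, and each j_q requires at least one of i_q, k_q to precede it. The minimum total weighted completion time over all feasible single-machine schedules equals m(m+1)/2. -/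
open scoped Classical

open Finset

/-- Position of each job in the optimal schedule: `i_q, j_q` alternate in the front,
all `k_q` go to the back. -/
def gval (m : ℕ) (x : Fin m × Fin 3) : ℕ :=
  if x.2 = 0 then 2 * x.1 else if x.2 = 2 then 2 * x.1 + 1 else 2 * m + x.1

lemma gval0 (m : ℕ) (r : Fin m) : gval m (r, 0) = 2 * (r : ℕ) := rfl
lemma gval1 (m : ℕ) (r : Fin m) : gval m (r, 1) = 2 * m + (r : ℕ) := rfl
lemma gval2 (m : ℕ) (r : Fin m) : gval m (r, 2) = 2 * (r : ℕ) + 1 := rfl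

lemma gval_lt (m : ℕ) (x : Fin m × Fin 3) : gval m x < 3 * m := by
  obtain ⟨⟨r, hr⟩, c⟩ := x
  unfold gval
  fin_cases c <;> simp <;> omega

def gfun (m : ℕ) : Fin m × Fin 3 → Fin (3 * m) := fun x => ⟨gval m x, gval_lt m x⟩

lemma gfun_inj (m : ℕ) : Function.Injective (gfun m) := by
  rintro ⟨⟨r, hr⟩, c⟩ ⟨⟨s, hs⟩, d⟩ h
  simp only [gfun, gval, Fin.mk.injEq] at h
  fin_cases c <;> fin_cases d <;> simp_all <;> omega

lemma sum_fin_succ (n : ℕ) : (∑ q : Fin n, ((q : ℝ) + 1)) = n * (n + 1) / 2 := by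
  induction n with
  | zero => simp
  | succ k ih =>
    rw [Fin.sum_univ_castSucc]
    simp only [Fin.coe_castSucc, Fin.val_last]
    rw [ih]
    push_cast
    ring

/-- The bipartite OR-precedence instance with `m` triples `{i_q, k_q, j_q}` (encoded as
`(q, 0), (q, 1), (q, 2)`), `p_{i_q} = p_{k_q} = 1`, `p_{j_q} = 0`, `w_{j_q} = 1`, other
weights 0, and `j_q` requiring `i_q` or `k_q` to precede it, has minimum total weighted
completion time exactly `m(m+1)/2`. -/
theorem stmt_9 (m : ℕ) (hm : 1 ≤ m)
    (p : Fin m × Fin 3 → ℝ)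
    (hp : ∀ j, p j = if j.2 = 2 then 0 else 1) :
    IsLeast
      {v : ℝ | ∃ σ : (Fin m × Fin 3) ≃ Fin (Fintype.card (Fin m × Fin 3)),
        (∀ q : Fin m, σ (q, 0) < σ (q, 2) ∨ σ (q, 1) < σ (q, 2)) ∧
        v = ∑ q : Fin m,
          ∑ i ∈ Finset.univ.filter (fun i => σ i ≤ σ (q, 2)), p i}
      (m * (m + 1) / 2) := by
  have hcard : Fintype.card (Fin m × Fin 3) = 3 * m := by
    simp [Fintype.card_prod, Nat.mul_comm]
  constructor
  · -- membership: the explicit schedule achieves m(m+1)/2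
    have hbij : Function.Bijective (gfun m) := by
      rw [Fintype.bijective_iff_injective_and_card]
      exact ⟨gfun_inj m, by simp [hcard]⟩
    set σ₀ : (Fin m × Fin 3) ≃ Fin (Fintype.card (Fin m × Fin 3)) :=
      (Equiv.ofBijective (gfun m) hbij).trans (finCongr hcard.symm) with hσ₀
    have hle' : ∀ x y : Fin m × Fin 3, (σ₀ x ≤ σ₀ y ↔ gval m x ≤ gval m y) := by
      intro x y
      simp only [hσ₀, Fin.le_def, Equiv.trans_apply, finCongr_apply, Fin.coe_cast,
        Equiv.ofBijective_apply, gfun]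
    have hlt' : ∀ x y : Fin m × Fin 3, (σ₀ x < σ₀ y ↔ gval m x < gval m y) := by
      intro x y
      simp only [hσ₀, Fin.lt_def, Equiv.trans_apply, finCongr_apply, Fin.coe_cast,
        Equiv.ofBijective_apply, gfun]
    have hfilter : ∀ q : Fin m,
        (Finset.univ.filter fun i : Fin m × Fin 3 => σ₀ i ≤ σ₀ (q, 2))
          = (Finset.univ.filter fun i => gval m i ≤ 2 * (q : ℕ) + 1) := by
      intro q
      apply Finset.filter_congr
      intro i _
      rw [hle', gval2]
    have hinner : ∀ q : Fin m,
        (∑ i ∈ Finset.univ.filter (fun i : Fin m × Fin 3 => gval m i ≤ 2 * (q : ℕ) + 1), p i)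
          = (q : ℝ) + 1 := by
      intro q
      rw [Finset.sum_filter, Fintype.sum_prod_type]
      have hrow : ∀ r : Fin m,
          (∑ c : Fin 3, if gval m (r, c) ≤ 2 * (q : ℕ) + 1 then p (r, c) else 0)
            = if (r : ℕ) ≤ (q : ℕ) then (1 : ℝ) else 0 := by
        intro r
        rw [Fin.sum_univ_three, gval0, gval1, gval2, hp (r, 0), hp (r, 1), hp (r, 2)]
        have hc0 : ¬ ((0 : Fin 3) = 2) := by decide
        have hc1 : ¬ ((1 : Fin 3) = 2) := by decide
        have hqm : (q : ℕ) < m := q.isLt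
        by_cases hle : (r : ℕ) ≤ (q : ℕ)
        · have c0 : 2 * (r : ℕ) ≤ 2 * (q : ℕ) + 1 := by omega
          have c1 : ¬ (2 * m + (r : ℕ) ≤ 2 * (q : ℕ) + 1) := by omega
          simp [c0, c1, hle, hc0, hc1]
        · have c0 : ¬ (2 * (r : ℕ) ≤ 2 * (q : ℕ) + 1) := by omega
          have c1 : ¬ (2 * m + (r : ℕ) ≤ 2 * (q : ℕ) + 1) := by omega
          simp [c0, c1, hle, hc0, hc1]
      rw [Finset.sum_congr rfl (fun r _ => hrow r), Finset.sum_boole]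
      have : (Finset.univ.filter fun r : Fin m => (r : ℕ) ≤ (q : ℕ)) = Finset.Iic q := by
        ext r
        simp only [Finset.mem_filter, Finset.mem_univ, true_and, Finset.mem_Iic, Fin.le_def]
      rw [this, Fin.card_Iic]
      push_cast
      ring
    refine ⟨σ₀, fun q => Or.inl ?_, ?_⟩
    · rw [hlt', gval0, gval2]
      omega
    · have : (∑ q : Fin m, ∑ i ∈ Finset.univ.filter (fun i => σ₀ i ≤ σ₀ (q, 2)), p i)
          = ∑ q : Fin m, ((q : ℝ) + 1) :=
        Finset.sum_congr rfl fun q _ => by rw [hfilter q, hinner q]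
      rw [this, sum_fin_succ]
  · -- lower bound
    rintro v ⟨σ, hσ, rfl⟩
    -- T q = number of j-jobs scheduled no later than j_q
    set T : Fin m → ℕ := fun q => (Finset.univ.filter fun r : Fin m => σ (r, 2) ≤ σ (q, 2)).card
      with hT
    -- the distinct unit predecessor of each j-job
    set g : Fin m → Fin m × Fin 3 := fun r => if σ (r, 0) < σ (r, 2) then (r, 0) else (r, 1)
      with hg
    have hglt : ∀ r, σ (g r) < σ (r, 2) := by
      intro r
      by_cases h : σ (r, 0) < σ (r, 2)
      · simp [hg, h]
      · rcases hσ r with h' | h'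
        · exact absurd h' h
        · simp [hg, h, h']
    have hg1 : ∀ r, (g r).1 = r := by
      intro r; by_cases h : σ (r, 0) < σ (r, 2) <;> simp [hg, h]
    have hg2 : ∀ r, (g r).2 ≠ 2 := by
      intro r
      by_cases h : σ (r, 0) < σ (r, 2) <;> simp only [hg, h, if_true, if_false] <;> decide
    -- inner sums are at least T q
    have hle : ∀ q : Fin m, (T q : ℝ) ≤
        ∑ i ∈ Finset.univ.filter (fun i => σ i ≤ σ (q, 2)), p i := by
      intro q
      have hps : (∑ i ∈ Finset.univ.filter (fun i => σ i ≤ σ (q, 2)), p i)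
          = ((Finset.univ.filter
              (fun i : Fin m × Fin 3 => σ i ≤ σ (q, 2) ∧ ¬ i.2 = 2)).card : ℝ) := by
        rw [Finset.sum_filter]
        have hpt : ∀ i : Fin m × Fin 3, (if σ i ≤ σ (q, 2) then p i else 0)
            = if σ i ≤ σ (q, 2) ∧ ¬ i.2 = 2 then (1 : ℝ) else 0 := by
          intro i
          rw [hp i]
          by_cases h1 : σ i ≤ σ (q, 2) <;> by_cases h2 : i.2 = 2 <;> simp [h1, h2]
        rw [Finset.sum_congr rfl (fun i _ => hpt i), Finset.sum_boole]
      rw [hps]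
      have hcardle : T q ≤ (Finset.univ.filter
          (fun i : Fin m × Fin 3 => σ i ≤ σ (q, 2) ∧ ¬ i.2 = 2)).card := by
        apply Finset.card_le_card_of_injOn g
        · intro r hr
          simp only [Finset.mem_coe, Finset.mem_filter, Finset.mem_univ, true_and] at hr ⊢
          exact ⟨le_of_lt (lt_of_lt_of_le (hglt r) hr), hg2 r⟩
        · intro a _ b _ hab
          have := congrArg Prod.fst hab
          rwa [hg1, hg1] at this
      exact_mod_cast hcardle
    -- double counting: 2 * ∑ T = m^2 + m
    have hsumT : 2 * (∑ q : Fin m, T q) = m * m + m := by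
      have hTf : ∀ q, T q = ∑ r : Fin m, if σ (r, 2) ≤ σ (q, 2) then 1 else 0 := by
        intro q; rw [hT]; exact Finset.card_filter _ _
      have hswap : (∑ q : Fin m, ∑ r : Fin m, if σ (r, 2) ≤ σ (q, 2) then 1 else 0)
          = (∑ q : Fin m, ∑ r : Fin m, if σ (q, 2) ≤ σ (r, 2) then 1 else 0) :=
        Finset.sum_comm
      have key : ∀ q r : Fin m,
          ((if σ (r, 2) ≤ σ (q, 2) then 1 else 0) + (if σ (q, 2) ≤ σ (r, 2) then 1 else 0))
          = if q = r then 2 else 1 := by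
        intro q r
        by_cases h : q = r
        · subst h; simp
        · have hne : σ (r, 2) ≠ σ (q, 2) := by
            intro hc
            exact h (congrArg Prod.fst (σ.injective hc)).symm
          rcases le_total (σ (r, 2)) (σ (q, 2)) with h1 | h1
          · have h2 : ¬ σ (q, 2) ≤ σ (r, 2) := fun h3 => hne (le_antisymm h1 h3)
            simp [h1, h2, h]
          · have h2 : ¬ σ (r, 2) ≤ σ (q, 2) := fun h3 => hne.symm (le_antisymm h1 h3)
            simp [h1, h2, h]
      calc 2 * (∑ q : Fin m, T q)
          = (∑ q : Fin m, ∑ r : Fin m, if σ (r, 2) ≤ σ (q, 2) then 1 else 0)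
            + (∑ q : Fin m, ∑ r : Fin m, if σ (q, 2) ≤ σ (r, 2) then 1 else 0) := by
            rw [← hswap, Finset.sum_congr rfl (fun q _ => hTf q)]; ring
        _ = ∑ q : Fin m, ∑ r : Fin m, if q = r then 2 else 1 := by
            rw [← Finset.sum_add_distrib]
            refine Finset.sum_congr rfl fun q _ => ?_
            rw [← Finset.sum_add_distrib]
            exact Finset.sum_congr rfl fun r _ => key q r
        _ = ∑ q : Fin m, (m + 1) := by
            refine Finset.sum_congr rfl fun q _ => ?_
            have hsplit : ∀ r : Fin m,
                (if q = r then 2 else 1) = 1 + (if q = r then 1 else 0) := by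
              intro r; by_cases h : q = r <;> simp [h]
            rw [Finset.sum_congr rfl (fun r _ => hsplit r), Finset.sum_add_distrib,
              Finset.sum_ite_eq]
            simp
        _ = m * m + m := by simp; ring
    -- conclude
    have hfinal : (m : ℝ) * (m + 1) / 2 = ∑ q : Fin m, (T q : ℝ) := by
      have h2 : ((2 * (∑ q : Fin m, T q) : ℕ) : ℝ) = ((m * m + m : ℕ) : ℝ) := by rw [hsumT]
      push_cast at h2
      linarith
    rw [hfinal]
    exact Finset.sum_le_sum fun q _ => hle q
end

section
/- For any single-machine schedule without idle time of jobs N with processing times p ≥ 0 and completion times C, and any S ⊆ N, it holds that ∑_{j∈S} p_j C_j ≥ (1/2)(∑_{j∈S} p_j)² + (1/2) ∑_{j∈S} p_j². -/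
open scoped Classical

lemma stmt_11_aux {ι : Type*} {α : Type*} [LinearOrder α] (p : ι → ℝ) (σ : ι → α)
    (hσ : Function.Injective σ) (S : Finset ι) :
    2 * ∑ j ∈ S, ∑ i ∈ S.filter (fun i => σ i ≤ σ j), p i * p j
      = (∑ j ∈ S, p j) ^ 2 + ∑ j ∈ S, p j ^ 2 := by
  classical
  induction S using Finset.induction with
  | empty => simp
  | @insert a S ha ih =>
    have hfa : (insert a S).filter (fun i => σ i ≤ σ a)
        = insert a (S.filter (fun i => σ i ≤ σ a)) := by
      rw [Finset.filter_insert, if_pos le_rfl]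
    have hstep : ∀ j ∈ S, ∑ i ∈ (insert a S).filter (fun i => σ i ≤ σ j), p i * p j
        = (if σ a ≤ σ j then p a * p j else 0)
          + ∑ i ∈ S.filter (fun i => σ i ≤ σ j), p i * p j := by
      intro j hj
      rw [Finset.filter_insert]
      by_cases h : σ a ≤ σ j
      · rw [if_pos h, if_pos h, Finset.sum_insert (by simp [ha])]
      · rw [if_neg h, if_neg h, zero_add]
    have hpart : ∑ i ∈ S.filter (fun i => σ i ≤ σ a), p i
        + ∑ j ∈ S, (if σ a ≤ σ j then p j else 0) = ∑ j ∈ S, p j := by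
      rw [← Finset.sum_filter]
      have : S.filter (fun j => σ a ≤ σ j) = S.filter (fun j => ¬ σ j ≤ σ a) := by
        apply Finset.filter_congr
        intro j hj
        have hne : σ j ≠ σ a := fun h => ha (hσ h ▸ hj)
        constructor
        · intro h1 h2; exact hne (le_antisymm h2 h1)
        · intro h1; exact le_of_not_ge h1
      rw [this, Finset.sum_filter_add_sum_filter_not]
    rw [Finset.sum_insert ha, hfa, Finset.sum_insert (by simp [ha]),
      Finset.sum_congr rfl hstep, Finset.sum_add_distrib, Finset.sum_insert ha,
      Finset.sum_insert ha]
    have h2 : ∑ j ∈ S, (if σ a ≤ σ j then p a * p j else 0)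
        = p a * ∑ j ∈ S, (if σ a ≤ σ j then p j else 0) := by
      rw [Finset.mul_sum]; congr 1; ext j; split <;> ring
    rw [h2]
    have h3 : ∑ x ∈ S.filter (fun i => σ i ≤ σ a), p x * p a
        = (∑ x ∈ S.filter (fun i => σ i ≤ σ a), p x) * p a := by rw [Finset.sum_mul]
    rw [h3]
    linear_combination 2 * p a * hpart + ih

/-- Parallel inequalities of Wolsey and Queyranne: for any single-machine schedule without
idle time (given by the ordering `σ`, so `C_j = ∑_{σ i ≤ σ j} p_i`) and any set `S`,
`∑_{j∈S} p_j C_j ≥ (1/2)(∑_{j∈S} p_j)² + (1/2)∑_{j∈S} p_j²`. -/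
theorem stmt_11 {ι : Type*} [Fintype ι] (p : ι → ℝ) (hp : ∀ j, 0 ≤ p j)
    (σ : ι ≃ Fin (Fintype.card ι)) (C : ι → ℝ)
    (hC : ∀ j, C j = ∑ i ∈ Finset.univ.filter (fun i => σ i ≤ σ j), p i)
    (S : Finset ι) :
    (∑ j ∈ S, p j) ^ 2 / 2 + (∑ j ∈ S, p j ^ 2) / 2 ≤ ∑ j ∈ S, p j * C j := by
  have key := stmt_11_aux p (fun i => σ i) (fun i j h => σ.injective (by simpa using h)) S
  have hle : ∑ j ∈ S, ∑ i ∈ S.filter (fun i => σ i ≤ σ j), p i * p j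
      ≤ ∑ j ∈ S, p j * C j := by
    apply Finset.sum_le_sum
    intro j hj
    rw [hC j, Finset.mul_sum]
    have : ∑ i ∈ S.filter (fun i => σ i ≤ σ j), p i * p j
        = ∑ i ∈ S.filter (fun i => σ i ≤ σ j), p j * p i := by
      congr 1; ext i; ring
    rw [this]
    apply Finset.sum_le_sum_of_subset_of_nonneg
    · intro i hi
      simp only [Finset.mem_filter] at hi ⊢
      exact ⟨Finset.mem_univ i, hi.2⟩
    · intro i _ _; exact mul_nonneg (hp j) (hp i)
  linarith
end

section
/- Let N = A ⊔ B be a bipartite OR-precedence instance with predecessor map P : B → finite subsets of A, processing times p ≥ 0, and for S ⊆ N and k ∈ N define mc(S,k) = min over T ⊆ N such that there exists U ⊆ S ∪ T with k ∈ U and U a feasible starting set, of ∑_{j∈T} p_j. Then for every feasible (precedence-respecting) schedule with completion times C, every k ∈ N and S ⊆ N: ∑_{j∈S} p_j C_j + mc(S,k)·C_k ≥ (1/2)(∑_{j∈S} p_j + mc(S,k))² + (1/2)(∑_{j∈S} p_j² + mc(S,k)²). -/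
open scoped Classical

/-- Feasible starting set for bipartite OR-precedence constraints. -/
def FSS12 {ι : Type*} [DecidableEq ι] (Pred : ι → Finset ι) (S : Finset ι) : Prop :=
  ∀ j ∈ S, (Pred j).Nonempty → (Pred j ∩ S).Nonempty

/-- Length of a minimal chain of job `k` w.r.t. the set `S`: the minimum total processing
time of a set `T` such that some `U ⊆ S ∪ T` containing `k` is a feasible starting set. -/
noncomputable def minChain {ι : Type*} [Fintype ι] [DecidableEq ι]
    (Pred : ι → Finset ι) (p : ι → ℝ) (S : Finset ι) (k : ι) : ℝ :=
  sInf {v : ℝ | ∃ T : Finset ι,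
    (∃ U ⊆ S ∪ T, k ∈ U ∧ FSS12 Pred U) ∧ v = ∑ j ∈ T, p j}

/-- Minimal-chain generalization of the parallel inequalities (Theorem 14): for any
feasible (OR-precedence-respecting) schedule with completion times `C` (idle time
allowed), any job `k` and any set `S`,
`∑_{j∈S} p_j C_j + mc(S,k)·C_k ≥ (1/2)(∑_{j∈S} p_j + mc(S,k))² + (1/2)(∑_{j∈S} p_j² + mc(S,k)²)`. -/
theorem stmt_12 {ι : Type*} [Fintype ι] [DecidableEq ι]
    (Pred : ι → Finset ι) (hbip : ∀ i j : ι, i ∈ Pred j → Pred i = ∅)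
    (p : ι → ℝ) (hp : ∀ j, 0 ≤ p j)
    (σ : ι ≃ Fin (Fintype.card ι))
    (hσ : ∀ j : ι, (Pred j).Nonempty → ∃ i ∈ Pred j, σ i < σ j)
    (C : ι → ℝ)
    (hC : ∀ j, ∑ i ∈ Finset.univ.filter (fun i => σ i ≤ σ j), p i ≤ C j)
    (k : ι) (S : Finset ι) :
    ((∑ j ∈ S, p j) + minChain Pred p S k) ^ 2 / 2 +
      ((∑ j ∈ S, p j ^ 2) + minChain Pred p S k ^ 2) / 2 ≤
    ∑ j ∈ S, p j * C j + minChain Pred p S k * C k := by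
  classical
  set m := minChain Pred p S k with hm
  set P := ∑ j ∈ S, p j with hP
  set Q := ∑ j ∈ S, p j ^ 2 with hQ
  -- the prefix sets of the schedule
  set Bset : ι → Finset ι := fun j => Finset.univ.filter (fun i => σ i ≤ σ j) with hBset
  have hFSS : ∀ j, FSS12 Pred (Bset j) := by
    intro j i hi hne
    obtain ⟨i', hi', hlt⟩ := hσ i hne
    refine ⟨i', Finset.mem_inter.2 ⟨hi', ?_⟩⟩
    simp only [hBset, Finset.mem_filter, Finset.mem_univ, true_and] at hi ⊢
    exact le_of_lt (lt_of_lt_of_le hlt hi)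
  set V : Set ℝ := {v : ℝ | ∃ T : Finset ι,
      (∃ U ⊆ S ∪ T, k ∈ U ∧ FSS12 Pred U) ∧ v = ∑ j ∈ T, p j} with hV
  have hbdd : BddBelow V := by
    refine ⟨0, ?_⟩
    rintro v ⟨T, _, rfl⟩
    exact Finset.sum_nonneg fun i _ => hp i
  have hmV : m = sInf V := rfl
  have hne : V.Nonempty := by
    refine ⟨∑ j ∈ (Finset.univ : Finset ι), p j, Finset.univ, ⟨Finset.univ, ?_, ?_, ?_⟩, rfl⟩
    · intro x hx; simp
    · exact Finset.mem_univ k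
    · intro j _ h; simpa [Finset.inter_univ] using h
  have h0m : 0 ≤ m := by
    rw [hmV]
    apply le_csInf hne
    rintro v ⟨T, _, rfl⟩
    exact Finset.sum_nonneg fun i _ => hp i
  -- f j : total processing of jobs of S scheduled up to j
  set f : ι → ℝ := fun j => ∑ i ∈ S.filter (fun i => σ i ≤ σ j), p i with hf
  have hsplit : ∀ j, f j + ∑ i ∈ Bset j \ S, p i = ∑ i ∈ Bset j, p i := by
    intro j
    have : S.filter (fun i => σ i ≤ σ j) = Bset j ∩ S := by
      ext i; simp [hBset, Finset.mem_filter, and_comm]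
    rw [hf]; simp only [this]
    exact Finset.sum_inter_add_sum_sdiff _ _ _
  have hCf : ∀ j, f j ≤ C j := by
    intro j
    refine le_trans ?_ (hC j)
    refine Finset.sum_le_sum_of_subset_of_nonneg ?_ (fun i _ _ => hp i)
    intro i hi
    simp only [Finset.mem_filter, Finset.mem_univ, true_and] at hi ⊢
    exact hi.2
  have hCm : ∀ j, σ k ≤ σ j → f j + m ≤ C j := by
    intro j hkj
    have hmem : (∑ i ∈ Bset j \ S, p i) ∈ V := by
      refine ⟨Bset j \ S, ⟨Bset j, ?_, ?_, hFSS j⟩, rfl⟩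
      · intro i hi
        by_cases hiS : i ∈ S
        · exact Finset.mem_union_left _ hiS
        · exact Finset.mem_union_right _ (Finset.mem_sdiff.2 ⟨hi, hiS⟩)
      · simp [hBset, hkj]
    have hle : m ≤ ∑ i ∈ Bset j \ S, p i := by
      rw [hmV]; exact csInf_le hbdd hmem
    calc f j + m ≤ f j + ∑ i ∈ Bset j \ S, p i := by linarith
      _ = ∑ i ∈ Bset j, p i := hsplit j
      _ ≤ C j := hC j
  -- the quadratic identity: 2 ∑_{j∈S} p_j f_j = P² + Q
  have hquad : 2 * ∑ j ∈ S, p j * f j = P ^ 2 + Q := by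
    have expand : ∀ j, p j * f j = ∑ i ∈ S, (if σ i ≤ σ j then p j * p i else 0) := by
      intro j
      rw [hf, Finset.mul_sum, Finset.sum_filter]
    have swap : ∑ j ∈ S, ∑ i ∈ S, (if σ i ≤ σ j then p j * p i else 0)
        = ∑ j ∈ S, ∑ i ∈ S, (if σ j ≤ σ i then p j * p i else 0) := by
      rw [Finset.sum_comm]
      apply Finset.sum_congr rfl; intro j _
      apply Finset.sum_congr rfl; intro i _
      split <;> ring
    have key : ∀ i j : ι, (if σ i ≤ σ j then p j * p i else 0)
        + (if σ j ≤ σ i then p j * p i else 0)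
        = p j * p i + (if i = j then p j * p i else 0) := by
      intro i j
      rcases lt_trichotomy (σ i) (σ j) with h | h | h
      · have h1 : i ≠ j := fun e => absurd (congrArg σ e) (ne_of_lt h)
        simp [le_of_lt h, not_le.2 h, h1]
      · have h1 : i = j := σ.injective h
        simp [h, h1]
      · have h1 : i ≠ j := fun e => absurd (congrArg σ e) (ne_of_gt h)
        simp [le_of_lt h, not_le.2 h, h1]
    calc 2 * ∑ j ∈ S, p j * f j
        = (∑ j ∈ S, ∑ i ∈ S, (if σ i ≤ σ j then p j * p i else 0))
          + ∑ j ∈ S, ∑ i ∈ S, (if σ j ≤ σ i then p j * p i else 0) := by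
          rw [← swap]; simp only [expand]; ring
      _ = ∑ j ∈ S, ∑ i ∈ S, (p j * p i + (if i = j then p j * p i else 0)) := by
          rw [← Finset.sum_add_distrib]
          apply Finset.sum_congr rfl; intro j _
          rw [← Finset.sum_add_distrib]
          exact Finset.sum_congr rfl fun i _ => key i j
      _ = P ^ 2 + Q := by
          simp only [Finset.sum_add_distrib]
          congr 1
          · rw [hP, sq, Finset.sum_mul_sum]
          · rw [hQ]
            apply Finset.sum_congr rfl
            intro j hj
            rw [Finset.sum_ite_eq' S j (fun i => p j * p i), if_pos hj, sq]
  -- split S by position relative to k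
  have hPsplit := Finset.sum_filter_add_sum_filter_not S (fun j => σ k ≤ σ j) (fun j => p j * C j)
  have hstep1 : ∑ j ∈ S.filter (fun j => σ k ≤ σ j), p j * (f j + m)
      ≤ ∑ j ∈ S.filter (fun j => σ k ≤ σ j), p j * C j := by
    apply Finset.sum_le_sum
    intro j hj
    exact mul_le_mul_of_nonneg_left (hCm j (Finset.mem_filter.1 hj).2) (hp j)
  have hstep2 : ∑ j ∈ S.filter (fun j => ¬ σ k ≤ σ j), p j * f j
      ≤ ∑ j ∈ S.filter (fun j => ¬ σ k ≤ σ j), p j * C j := by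
    apply Finset.sum_le_sum
    intro j _
    exact mul_le_mul_of_nonneg_left (hCf j) (hp j)
  have hfk : ∑ j ∈ S.filter (fun j => ¬ σ k ≤ σ j), p j ≤ f k := by
    rw [hf]
    refine Finset.sum_le_sum_of_subset_of_nonneg ?_ (fun i _ _ => hp i)
    intro i hi
    rw [Finset.mem_filter] at hi ⊢
    exact ⟨hi.1, le_of_not_ge hi.2⟩
  have hPge : P ≤ (∑ j ∈ S.filter (fun j => σ k ≤ σ j), p j) + f k := by
    have := Finset.sum_filter_add_sum_filter_not S (fun j => σ k ≤ σ j) p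
    rw [hP, ← this]
    linarith
  have hsum1 : ∑ j ∈ S.filter (fun j => σ k ≤ σ j), p j * (f j + m)
      = (∑ j ∈ S.filter (fun j => σ k ≤ σ j), p j * f j)
        + m * ∑ j ∈ S.filter (fun j => σ k ≤ σ j), p j := by
    rw [Finset.mul_sum, ← Finset.sum_add_distrib]
    exact Finset.sum_congr rfl fun j _ => by ring
  have hfsplit := Finset.sum_filter_add_sum_filter_not S (fun j => σ k ≤ σ j)
    (fun j => p j * f j)
  have hCk : f k + m ≤ C k := hCm k le_rfl
  have hmCk : m * (f k + m) ≤ m * C k := mul_le_mul_of_nonneg_left hCk h0m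
  have hmP : m * P ≤ m * ((∑ j ∈ S.filter (fun j => σ k ≤ σ j), p j) + f k) :=
    mul_le_mul_of_nonneg_left hPge h0m
  nlinarith [hstep1, hstep2, hmCk, hmP, hquad, hPsplit, hsum1, hfsplit, sq_nonneg (P - m)]
end

section
/- Consider the instance with jobs A = {a, i_1,...,i_m}, B = {j_1,...,j_m}, P(j_q) = {a, i_q}, p_a = m/2, p_{i_q} = 1, p_{j_q} = 0, w_a = w_{i_q} = 0, w_{j_q} = 1. Then the minimum of ∑_q C_{j_q} over feasible schedules equals m²/2 (achieved by scheduling a first, then all j_q, then all i_q), and the vector C* with C*_{j_q} = 1, C*_{i_q} = q+1, C*_a = 3m/2 + 1 satisfies all minimal-chain inequalities ∑_{j∈S} p_j C_j + mc(S,k) C_k ≥ f_k(S) for all k and S, and has objective value m. Hence the completion-time LP with all minimal-chain inequalities has integrality gap at least m/2 on this family. -/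
open scoped Classical

/-- Feasible starting set for bipartite OR-precedence constraints. -/
def FSS13 {ι : Type*} [DecidableEq ι] (Pred : ι → Finset ι) (S : Finset ι) : Prop :=
  ∀ j ∈ S, (Pred j).Nonempty → (Pred j ∩ S).Nonempty

/-- Length of a minimal chain of job `k` w.r.t. the set `S`. -/
noncomputable def minChain13 {ι : Type*} [Fintype ι] [DecidableEq ι]
    (Pred : ι → Finset ι) (p : ι → ℝ) (S : Finset ι) (k : ι) : ℝ :=
  sInf {v : ℝ | ∃ T : Finset ι,
    (∃ U ⊆ S ∪ T, k ∈ U ∧ FSS13 Pred U) ∧ v = ∑ j ∈ T, p j}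

lemma pairs13 {γ δ : Type*} [DecidableEq γ] [LinearOrder δ] (Q : Finset γ) (f : γ → δ)
    (hf : ∀ a ∈ Q, ∀ b ∈ Q, f a = f b → a = b) :
    Q.card * Q.card + Q.card = 2 * ∑ q ∈ Q, (Q.filter (fun r => f r ≤ f q)).card := by
  classical
  have hcard : ∀ q, (Q.filter (fun r => f r ≤ f q)).card
      = ∑ r ∈ Q, if f r ≤ f q then 1 else 0 := by
    intro q; rw [Finset.card_filter]
  calc Q.card * Q.card + Q.card
      = ∑ q ∈ Q, ∑ r ∈ Q, ((if f r ≤ f q then 1 else 0) + (if f q ≤ f r then 1 else 0)) := by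
        have : ∀ q ∈ Q, ∀ r ∈ Q,
            ((if f r ≤ f q then 1 else 0) + (if f q ≤ f r then 1 else 0) : ℕ)
              = 1 + (if q = r then 1 else 0) := by
          intro q hq r hr
          rcases lt_trichotomy (f r) (f q) with h | h | h
          · have h1 : ¬ f q ≤ f r := not_le.2 h
            have h2 : q ≠ r := fun e => absurd (e ▸ rfl) h.ne'
            simp [h.le, h1, h2]
          · have : q = r := hf q hq r hr (h.symm)
            simp [this, h.le, h.ge]
          · have h1 : ¬ f r ≤ f q := not_le.2 h
            have h2 : q ≠ r := fun e => absurd (e ▸ rfl) h.ne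
            simp [h.le, h1, h2]
        rw [Finset.sum_congr rfl (fun q hq => Finset.sum_congr rfl (fun r hr => this q hq r hr))]
        have : ∀ q ∈ Q, ∑ r ∈ Q, (1 + (if q = r then 1 else 0) : ℕ) = Q.card + 1 := by
          intro q hq
          rw [Finset.sum_add_distrib, Finset.sum_const, Finset.sum_ite_eq Q q (fun _ => 1)]
          simp [hq]
        rw [Finset.sum_congr rfl this, Finset.sum_const]
        ring
    _ = (∑ q ∈ Q, ∑ r ∈ Q, (if f r ≤ f q then 1 else 0))
        + ∑ q ∈ Q, ∑ r ∈ Q, (if f q ≤ f r then 1 else 0) := by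
        rw [← Finset.sum_add_distrib]
        exact Finset.sum_congr rfl fun q _ => Finset.sum_add_distrib
    _ = 2 * ∑ q ∈ Q, (Q.filter (fun r => f r ≤ f q)).card := by
        rw [Finset.sum_comm (s := Q) (t := Q) (f := fun q r => (if f q ≤ f r then 1 else 0))]
        simp only [hcard]
        ring

section
variable (m : ℕ)

def code13 (m : ℕ) : Option (Bool × Fin m) → ℕ
  | none => 0
  | some (true, q) => q + 1
  | some (false, q) => m + 1 + q

lemma code13_lt (x : Option (Bool × Fin m)) : code13 m x < 2 * m + 1 := by
  rcases x with _ | ⟨b, q⟩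
  · simp [code13]
  · have := q.isLt; cases b <;> simp [code13] <;> omega

lemma code13_inj : Function.Injective (code13 m) := by
  rintro (_ | ⟨b, q⟩) (_ | ⟨c, r⟩) h
  · rfl
  · exfalso; have := r.isLt; cases c <;> simp [code13] at h <;> omega
  · exfalso; have := q.isLt; cases b <;> simp [code13] at h <;> omega
  · have hq := q.isLt; have hr := r.isLt
    cases b <;> cases c <;> simp only [code13] at h <;>
      first
        | omega
        | (have : q = r := Fin.ext (by omega); rw [this])
end


lemma memb13 (m : ℕ) (hm : 1 ≤ m) (p : Option (Bool × Fin m) → ℝ)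
    (hpa : p none = m / 2)
    (hpi : ∀ q : Fin m, p (some (false, q)) = 1)
    (hpj : ∀ q : Fin m, p (some (true, q)) = 0)
    (Pred : Option (Bool × Fin m) → Finset (Option (Bool × Fin m)))
    (hPa : Pred none = ∅)
    (hPi : ∀ q, Pred (some (false, q)) = ∅)
    (hPj : ∀ q, Pred (some (true, q)) = {none, some (false, q)}) :
    ∃ σ : Option (Bool × Fin m) ≃ Fin (Fintype.card (Option (Bool × Fin m))),
        (∀ j, (Pred j).Nonempty → ∃ i ∈ Pred j, σ i < σ j) ∧
        ((m:ℝ)^2/2) = ∑ q : Fin m,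
          ∑ i ∈ Finset.univ.filter (fun i => σ i ≤ σ (some (true, q))), p i := by
  have hN : Fintype.card (Option (Bool × Fin m)) = 2 * m + 1 := by
    simp [Fintype.card_option]
  let f : Option (Bool × Fin m) → Fin (Fintype.card (Option (Bool × Fin m))) :=
    fun x => ⟨code13 m x, by rw [hN]; exact code13_lt m x⟩
  have hfinj : Function.Injective f := by
    intro x y h
    exact code13_inj m (by simpa [f, Fin.mk.injEq] using h)
  have hfbij : Function.Bijective f := (Fintype.bijective_iff_injective_and_card f).mpr ⟨hfinj, by simp⟩
  refine ⟨Equiv.ofBijective f hfbij, ?_, ?_⟩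
  · intro j hj
    rcases j with _ | ⟨b, q⟩
    · rw [hPa] at hj; simp at hj
    · cases b
      · rw [hPi] at hj; simp at hj
      · refine ⟨none, by rw [hPj]; simp, ?_⟩
        show f none < f (some (true, q))
        simp [f, Fin.lt_def, code13]
  · have hinner : ∀ q : Fin m,
        ∑ i ∈ Finset.univ.filter
          (fun i => Equiv.ofBijective f hfbij i ≤ Equiv.ofBijective f hfbij (some (true, q))), p i
        = m / 2 := by
      intro q
      have hcond : ∀ i, (Equiv.ofBijective f hfbij i ≤ Equiv.ofBijective f hfbij (some (true, q)))
          ↔ code13 m i ≤ q + 1 := by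
        intro i; rfl
      rw [Finset.sum_filter]
      have h0 : (∑ j : Option (Bool × Fin m),
          if code13 m j ≤ q + 1 then p j else 0) = m / 2 := by
        rw [Fintype.sum_option, Fintype.sum_prod_type, Fintype.sum_bool]
        have ht : ∀ r : Fin m, (if code13 m (some (true, r)) ≤ q + 1 then p (some (true, r)) else 0) = 0 := by
          intro r; simp [hpj r]
        have hf' : ∀ r : Fin m, (if code13 m (some (false, r)) ≤ q + 1 then p (some (false, r)) else 0) = 0 := by
          intro r
          have : ¬ (code13 m (some (false, r)) ≤ q + 1) := by
            simp only [code13]; have := q.isLt; omega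
          simp [this]
        rw [Finset.sum_congr rfl (fun r _ => ht r), Finset.sum_congr rfl (fun r _ => hf' r)]
        simp [code13, hpa]
      rw [← h0]
      exact Finset.sum_congr rfl fun i _ => if_congr (hcond i) rfl rfl
    rw [Finset.sum_congr rfl (fun q _ => hinner q), Finset.sum_const]
    simp
    ring

lemma lower13 (m : ℕ) (hm : 1 ≤ m) (p : Option (Bool × Fin m) → ℝ)
    (hpa : p none = m / 2)
    (hpi : ∀ q : Fin m, p (some (false, q)) = 1)
    (hpj : ∀ q : Fin m, p (some (true, q)) = 0)
    (Pred : Option (Bool × Fin m) → Finset (Option (Bool × Fin m)))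
    (hPa : Pred none = ∅)
    (hPi : ∀ q, Pred (some (false, q)) = ∅)
    (hPj : ∀ q, Pred (some (true, q)) = {none, some (false, q)})
    (σ : Option (Bool × Fin m) ≃ Fin (Fintype.card (Option (Bool × Fin m))))
    (hfeas : ∀ j, (Pred j).Nonempty → ∃ i ∈ Pred j, σ i < σ j) :
    (m : ℝ)^2/2 ≤ ∑ q : Fin m,
          ∑ i ∈ Finset.univ.filter (fun i => σ i ≤ σ (some (true, q))), p i := by
  classical
  have hp0 : ∀ x, 0 ≤ p x := by
    rintro (_ | ⟨b, q⟩)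
    · rw [hpa]; positivity
    · cases b
      · rw [hpi]; norm_num
      · rw [hpj]
  set C : Fin m → ℝ := fun q =>
    ∑ i ∈ Finset.univ.filter (fun i => σ i ≤ σ (some (true, q))), p i with hC
  set Q : Finset (Fin m) :=
    Finset.univ.filter (fun q => σ (some (true, q)) < σ none) with hQdef
  set T : ℕ := Q.card with hT
  -- each q in Q has its i before its j
  have hQi : ∀ q ∈ Q, σ (some (false, q)) < σ (some (true, q)) := by
    intro q hq
    have hq' : σ (some (true, q)) < σ none := (Finset.mem_filter.1 hq).2
    obtain ⟨i, hi, hlt⟩ := hfeas (some (true, q)) (by rw [hPj]; exact ⟨none, by simp⟩)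
    rw [hPj] at hi
    rcases Finset.mem_insert.1 hi with rfl | hi
    · exact absurd hq' (asymm hlt)
    · rw [Finset.mem_singleton.1 hi] at hlt; exact hlt
  -- lower bound for q not in Q
  have hstep2 : ∀ q ∈ Finset.univ.filter (fun q => ¬ (σ (some (true, q)) < σ none)),
      (m : ℝ)/2 + T ≤ C q := by
    intro q hq
    have hq' : σ none ≤ σ (some (true, q)) := not_lt.1 (Finset.mem_filter.1 hq).2
    set W : Finset (Option (Bool × Fin m)) :=
      insert none (Q.image (fun r => some (false, r))) with hW
    have hWsub : W ⊆ Finset.univ.filter (fun i => σ i ≤ σ (some (true, q))) := by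
      intro x hx
      rcases Finset.mem_insert.1 hx with rfl | hx
      · exact Finset.mem_filter.2 ⟨Finset.mem_univ _, hq'⟩
      · obtain ⟨r, hr, rfl⟩ := Finset.mem_image.1 hx
        refine Finset.mem_filter.2 ⟨Finset.mem_univ _, ?_⟩
        have h1 := hQi r hr
        have h2 : σ (some (true, r)) < σ none := (Finset.mem_filter.1 hr).2
        exact le_of_lt (lt_of_lt_of_le (lt_trans h1 h2) hq')
    have hWsum : ∑ i ∈ W, p i = (m : ℝ)/2 + T := by
      rw [hW, Finset.sum_insert (by simp)]
      rw [Finset.sum_image (by intro a _ b _ h; simpa using h)]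
      rw [hpa, Finset.sum_congr rfl (fun r _ => hpi r), Finset.sum_const]
      simp [hT]
    calc (m : ℝ)/2 + T = ∑ i ∈ W, p i := hWsum.symm
      _ ≤ C q := Finset.sum_le_sum_of_subset_of_nonneg hWsub (fun i _ _ => hp0 i)
  -- lower bound for q in Q
  have hstep3 : ∀ q ∈ Q,
      ((Q.filter (fun r => σ (some (true, r)) ≤ σ (some (true, q)))).card : ℝ) ≤ C q := by
    intro q hq
    set W := (Q.filter (fun r => σ (some (true, r)) ≤ σ (some (true, q)))).image
      (fun r => some (false, r) : Fin m → Option (Bool × Fin m)) with hW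
    have hWsub : W ⊆ Finset.univ.filter (fun i => σ i ≤ σ (some (true, q))) := by
      intro x hx
      obtain ⟨r, hr, rfl⟩ := Finset.mem_image.1 hx
      obtain ⟨hrQ, hrle⟩ := Finset.mem_filter.1 hr
      exact Finset.mem_filter.2 ⟨Finset.mem_univ _, le_of_lt (lt_of_lt_of_le (hQi r hrQ) hrle)⟩
    have hWsum : ∑ i ∈ W, p i
        = ((Q.filter (fun r => σ (some (true, r)) ≤ σ (some (true, q)))).card : ℝ) := by
      rw [hW, Finset.sum_image (by intro a _ b _ h; simpa using h)]
      rw [Finset.sum_congr rfl (fun r _ => hpi r), Finset.sum_const]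
      simp
    calc ((Q.filter (fun r => σ (some (true, r)) ≤ σ (some (true, q)))).card : ℝ)
        = ∑ i ∈ W, p i := hWsum.symm
      _ ≤ C q := Finset.sum_le_sum_of_subset_of_nonneg hWsub (fun i _ _ => hp0 i)
  -- the pair counting
  have hpair : T * T + T = 2 * ∑ q ∈ Q,
      (Q.filter (fun r => σ (some (true, r)) ≤ σ (some (true, q)))).card := by
    apply pairs13 Q (fun q => σ (some (true, q)))
    intro a _ b _ h
    have := σ.injective h
    simpa using this
  have hsplit : ∑ q : Fin m, C q = ∑ q ∈ Q, C q
      + ∑ q ∈ Finset.univ.filter (fun q => ¬ (σ (some (true, q)) < σ none)), C q := by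
    rw [hQdef]
    exact (Finset.sum_filter_add_sum_filter_not _ _ _).symm
  have hTcard : T + (Finset.univ.filter
      (fun q => ¬ (σ (some (true, q)) < σ none))).card = m := by
    rw [hT, hQdef]
    rw [Finset.card_filter_add_card_filter_not]
    simp
  set T' : ℕ := (Finset.univ.filter (fun q => ¬ (σ (some (true, q)) < σ none))).card with hT'
  have h1 : ∑ q ∈ Q, C q ≥ ((T * T + T : ℕ) : ℝ) / 2 := by
    have : (∑ q ∈ Q, ((Q.filter (fun r => σ (some (true, r)) ≤ σ (some (true, q)))).card : ℝ))
        ≤ ∑ q ∈ Q, C q := Finset.sum_le_sum hstep3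
    rw [hpair]
    push_cast at this ⊢
    linarith
  have h2 : ∑ q ∈ Finset.univ.filter (fun q => ¬ (σ (some (true, q)) < σ none)), C q
      ≥ T' * ((m : ℝ)/2 + T) := by
    have := Finset.sum_le_sum hstep2
    rw [Finset.sum_const] at this
    simpa only [nsmul_eq_mul] using this
  rw [hsplit]
  have hTm : (T : ℝ) + T' = m := by exact_mod_cast congrArg (Nat.cast : ℕ → ℝ) hTcard
  have hT0 : (0:ℝ) ≤ T := Nat.cast_nonneg _
  have hT'0 : (0:ℝ) ≤ T' := Nat.cast_nonneg _
  have h1' : ((T * T + T : ℕ) : ℝ) / 2 = ((T:ℝ) * T + T)/2 := by push_cast; ring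
  rw [h1'] at h1
  nlinarith [h1, h2, hTm, hT0, hT'0]

lemma tri13 (s : Finset ℕ) : ∑ i ∈ Finset.range s.card, i ≤ ∑ i ∈ s, i := by
  induction s using Finset.strongInductionOn with
  | _ s ih =>
    rcases s.eq_empty_or_nonempty with rfl | hs
    · simp
    · set M := s.max' hs with hMdef
      have hM : M ∈ s := s.max'_mem hs
      have hcard : s.card ≤ M + 1 := by
        have hsub : s ⊆ Finset.range (M + 1) := fun x hx =>
          Finset.mem_range.2 (Nat.lt_succ_of_le (Finset.le_max' s x hx))
        simpa using Finset.card_le_card hsub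
      obtain ⟨n, hn⟩ : ∃ n, s.card = n + 1 :=
        ⟨s.card - 1, (Nat.succ_pred_eq_of_pos (Finset.card_pos.2 hs)).symm⟩
      have h1 : (s.erase M).card = n := by rw [Finset.card_erase_of_mem hM, hn]; omega
      have h2 := ih (s.erase M) (Finset.erase_ssubset hM)
      rw [h1] at h2
      have h3 : ∑ i ∈ s, i = M + ∑ i ∈ s.erase M, i := (Finset.add_sum_erase s _ hM).symm
      rw [hn, Finset.sum_range_succ, h3]
      omega

lemma split13 {m : ℕ} (S : Finset (Option (Bool × Fin m))) (g : Option (Bool × Fin m) → ℝ)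
    (hg : ∀ q, g (some (true, q)) = 0) :
    ∑ j ∈ S, g j = (if none ∈ S then g none else 0)
      + ∑ q ∈ Finset.univ.filter (fun q : Fin m => some (false, q) ∈ S), g (some (false, q)) := by
  classical
  have h0 : ∑ j ∈ S, g j = ∑ j : Option (Bool × Fin m), if j ∈ S then g j else 0 := by
    rw [Finset.sum_ite_mem, Finset.univ_inter]
  rw [h0, Fintype.sum_option, Fintype.sum_prod_type, Fintype.sum_bool]
  have h1 : ∑ q : Fin m, (if some (true, q) ∈ S then g (some (true, q)) else 0) = 0 := by
    apply Finset.sum_eq_zero; intro q _; simp [hg q]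
  rw [h1, Finset.sum_filter]
  ring

lemma fin13A (P Q2 R mu K : ℝ) (hiii : P^2/2 + Q2/2 + P ≤ R) (h0 : 0 ≤ mu)
    (h1 : mu ≤ 1) (hK : 1 ≤ K) (hP : 0 ≤ P) :
    (P + mu)^2/2 + (Q2 + mu^2)/2 ≤ R + mu * K := by
  nlinarith [mul_nonneg (sub_nonneg.2 h1) hP, mul_nonneg h0 (sub_nonneg.2 h1),
    mul_nonneg h0 (sub_nonneg.2 hK)]

lemma fin13B (P Q2 R mu M : ℝ) (hiii : P^2/2 + Q2/2 + P ≤ R) (h0 : 0 ≤ mu)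
    (h1 : mu ≤ M/2) (hP : 0 ≤ P) (hPM : P ≤ M) (hM : 1 ≤ M) :
    (P + mu)^2/2 + (Q2 + mu^2)/2 ≤ R + mu * (3*M/2 + 1) := by
  nlinarith [mul_nonneg h0 (sub_nonneg.2 hPM), mul_nonneg h0 (sub_nonneg.2 h1)]

lemma ineq13 (m : ℕ) (hm : 1 ≤ m) (p : Option (Bool × Fin m) → ℝ)
    (hpa : p none = m / 2)
    (hpi : ∀ q : Fin m, p (some (false, q)) = 1)
    (hpj : ∀ q : Fin m, p (some (true, q)) = 0)
    (Pred : Option (Bool × Fin m) → Finset (Option (Bool × Fin m)))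
    (hPa : Pred none = ∅)
    (hPi : ∀ q, Pred (some (false, q)) = ∅)
    (hPj : ∀ q, Pred (some (true, q)) = {none, some (false, q)})
    (Cs : Option (Bool × Fin m) → ℝ)
    (hCa : Cs none = 3 * m / 2 + 1)
    (hCi : ∀ q : Fin m, Cs (some (false, q)) = (q : ℕ) + 2)
    (hCj : ∀ q : Fin m, Cs (some (true, q)) = 1) :
    (∀ (k : Option (Bool × Fin m)) (S : Finset (Option (Bool × Fin m))),
      ((∑ j ∈ S, p j) + minChain13 Pred p S k) ^ 2 / 2 +
        ((∑ j ∈ S, p j ^ 2) + minChain13 Pred p S k ^ 2) / 2 ≤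
      ∑ j ∈ S, p j * Cs j + minChain13 Pred p S k * Cs k) := by
  classical
  have hp0 : ∀ x, 0 ≤ p x := by
    rintro (_ | ⟨b, q⟩)
    · rw [hpa]; positivity
    · cases b
      · rw [hpi]; norm_num
      · rw [hpj]
  intro k S
  set I : Finset (Fin m) := Finset.univ.filter (fun q : Fin m => some (false, q) ∈ S) with hIdef
  set n : ℕ := I.card with hn
  have hnm : n ≤ m := by
    calc n ≤ (Finset.univ : Finset (Fin m)).card := Finset.card_le_card (Finset.filter_subset _ _)
    _ = m := by simp
  have hA : ∑ j ∈ S, p j = (if none ∈ S then (m:ℝ)/2 else 0) + n := by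
    rw [split13 S p hpj, hpa]
    rw [Finset.sum_congr rfl (fun q _ => hpi q), Finset.sum_const]
    simp [hn, hIdef]
  have hB : ∑ j ∈ S, p j ^ 2 = (if none ∈ S then ((m:ℝ)/2)^2 else 0) + n := by
    rw [split13 S (fun x => p x ^ 2) (fun q => by show p _ ^ 2 = 0; rw [hpj]; ring), hpa]
    rw [Finset.sum_congr rfl (fun q _ => by rw [hpi q]; norm_num : ∀ q ∈ Finset.univ.filter (fun q : Fin m => some (false, q) ∈ S), p (some (false,q))^2 = 1), Finset.sum_const]
    simp [hn, hIdef]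
  have hCsum : ∑ j ∈ S, p j * Cs j
      = (if none ∈ S then ((m:ℝ)/2) * (3*m/2+1) else 0) + (∑ q ∈ I, ((q:ℕ):ℝ)) + 2*n := by
    rw [split13 S (fun x => p x * Cs x) (fun q => by show p _ * Cs _ = 0; rw [hpj]; ring), hpa, hCa]
    rw [Finset.sum_congr rfl (fun q _ => by rw [hpi q, hCi q]; ring :
      ∀ q ∈ Finset.univ.filter (fun q : Fin m => some (false, q) ∈ S),
        p (some (false,q)) * Cs (some (false,q)) = ((q:ℕ):ℝ) + 2)]
    rw [Finset.sum_add_distrib, Finset.sum_const]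
    simp [hn]
    ring
  -- triangular bound
  have htri : (n:ℝ) * n - n ≤ 2 * ∑ q ∈ I, ((q:ℕ):ℝ) := by
    have hinj : Function.Injective (Fin.val : Fin m → ℕ) := Fin.val_injective
    set s : Finset ℕ := I.image Fin.val with hs
    have hcard : s.card = n := by rw [hs, Finset.card_image_of_injective _ hinj, hn]
    have hsum : ∑ i ∈ s, i = ∑ q ∈ I, (q : ℕ) := Finset.sum_image (fun a _ b _ h => hinj h)
    have h2 := tri13 s
    have h3 : (∑ i ∈ Finset.range s.card, i) * 2 = s.card * (s.card - 1) :=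
      Finset.sum_range_id_mul_two s.card
    rw [hcard] at h2 h3
    rw [hsum] at h2
    have h4 : n * (n - 1) ≤ 2 * ∑ q ∈ I, (q:ℕ) := by omega
    rcases Nat.eq_zero_or_pos n with h0 | hpos
    · have hq0 : (0:ℝ) ≤ ∑ q ∈ I, ((q:ℕ):ℝ) :=
        Finset.sum_nonneg (fun q _ => Nat.cast_nonneg _)
      rw [h0]; push_cast; linarith
    · have := (Nat.cast_le (α := ℝ)).2 h4
      rw [Nat.cast_mul, Nat.cast_sub hpos] at this
      push_cast at this
      linarith
  have hiii : (∑ j ∈ S, p j)^2/2 + (∑ j ∈ S, p j ^ 2)/2 + (∑ j ∈ S, p j) ≤ ∑ j ∈ S, p j * Cs j := by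
    by_cases hnS : none ∈ S
    · rw [hA, hB, hCsum]; simp only [if_pos hnS]
      have hmn : (n:ℝ) ≤ m := by exact_mod_cast hnm
      have hm1 : (1:ℝ) ≤ m := by exact_mod_cast hm
      nlinarith [htri, hmn, hm1, Nat.cast_nonneg (α := ℝ) n]
    · rw [hA, hB, hCsum]; simp only [if_neg hnS]
      nlinarith [htri, Nat.cast_nonneg (α := ℝ) n]
  -- minChain bounds
  set V : Set ℝ := {v : ℝ | ∃ T : Finset (Option (Bool × Fin m)),
    (∃ U ⊆ S ∪ T, k ∈ U ∧ FSS13 Pred U) ∧ v = ∑ j ∈ T, p j} with hV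
  have hVmc : minChain13 Pred p S k = sInf V := rfl
  have hVnn : ∀ v ∈ V, 0 ≤ v := by
    rintro v ⟨T, _, rfl⟩
    exact Finset.sum_nonneg (fun i _ => hp0 i)
  have hbdd : BddBelow V := ⟨0, fun v hv => hVnn v hv⟩
  have hmc0 : 0 ≤ minChain13 Pred p S k := by
    rw [hVmc]; exact Real.sInf_nonneg hVnn
  have hP0 : 0 ≤ ∑ j ∈ S, p j := Finset.sum_nonneg (fun i _ => hp0 i)
  set μ := minChain13 Pred p S k with hμ
  rcases k with _ | ⟨b, q⟩
  · by_cases hnS : none ∈ S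
    · have hle : μ ≤ 0 := by
        apply csInf_le hbdd
        refine ⟨∅, ⟨{none}, ?_, by simp, ?_⟩, by simp⟩
        · intro x hx; rw [Finset.mem_singleton.1 hx]; exact Finset.mem_union_left _ hnS
        · intro j hj hne
          rw [Finset.mem_singleton.1 hj] at hne ⊢
          rw [hPa] at hne; simp at hne
      have h0 : μ = 0 := le_antisymm hle hmc0
      rw [h0]
      simp only [add_zero, zero_mul]
      nlinarith [hiii, hP0]
    · have hle : μ ≤ (m:ℝ)/2 := by
        apply csInf_le hbdd
        refine ⟨{none}, ⟨{none}, ?_, by simp, ?_⟩, by simp [hpa]⟩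
        · intro x hx; rw [Finset.mem_singleton.1 hx]
          exact Finset.mem_union_right _ (Finset.mem_singleton_self _)
        · intro j hj hne
          rw [Finset.mem_singleton.1 hj] at hne
          rw [hPa] at hne; simp at hne
      have hPm : ∑ j ∈ S, p j ≤ m := by
        rw [hA]; simp only [if_neg hnS]
        have : (n:ℝ) ≤ m := by exact_mod_cast hnm
        linarith
      rw [hCa]
      have hm1 : (1:ℝ) ≤ m := by exact_mod_cast hm
      exact fin13B _ _ _ _ _ hiii hmc0 hle hP0 hPm hm1
  · cases b
    · -- k = i_q
      have hle : μ ≤ 1 := by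
        apply csInf_le hbdd
        refine ⟨{some (false, q)}, ⟨{some (false, q)}, ?_, by simp, ?_⟩, by simp [hpi]⟩
        · intro x hx; rw [Finset.mem_singleton.1 hx]
          exact Finset.mem_union_right _ (Finset.mem_singleton_self _)
        · intro j hj hne
          rw [Finset.mem_singleton.1 hj] at hne
          rw [hPi] at hne; simp at hne
      have hCk : (1:ℝ) ≤ Cs (some (false, q)) := by
        rw [hCi]
        have : (0:ℝ) ≤ ((q:ℕ):ℝ) := Nat.cast_nonneg _
        linarith
      exact fin13A _ _ _ _ _ hiii hmc0 hle hCk hP0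
    · -- k = j_q
      have hle : μ ≤ 1 := by
        apply csInf_le hbdd
        refine ⟨{some (false, q), some (true, q)}, ⟨{some (false, q), some (true, q)}, ?_, ?_, ?_⟩, ?_⟩
        · intro x hx; exact Finset.mem_union_right _ hx
        · simp
        · intro j hj hne
          rcases Finset.mem_insert.1 hj with rfl | hj
          · rw [hPi] at hne; simp at hne
          · rw [Finset.mem_singleton.1 hj] at hne ⊢
            rw [hPj] at hne ⊢
            exact ⟨some (false, q), Finset.mem_inter.2 ⟨by simp, by simp⟩⟩
        · rw [Finset.sum_pair (by simp), hpi, hpj]; ring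
      exact fin13A _ _ _ _ _ hiii hmc0 hle (le_of_eq (hCj q).symm) hP0

/-- The gap instance for the completion-time LP: jobs `a = none`, `i_q = some (false, q)`,
`j_q = some (true, q)` with `P(j_q) = {a, i_q}`, `p_a = m/2`, `p_{i_q} = 1`, `p_{j_q} = 0`,
`w_{j_q} = 1`.  The optimal schedule value is `m²/2`, while the vector `C*` with
`C*_{j_q} = 1`, `C*_{i_q} = q + 1`, `C*_a = 3m/2 + 1` satisfies all minimal-chain
inequalities and has objective value `m`. -/
theorem stmt_13 (m : ℕ) (hm : 1 ≤ m)
    (p : Option (Bool × Fin m) → ℝ)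
    (hpa : p none = m / 2)
    (hpi : ∀ q : Fin m, p (some (false, q)) = 1)
    (hpj : ∀ q : Fin m, p (some (true, q)) = 0)
    (Pred : Option (Bool × Fin m) → Finset (Option (Bool × Fin m)))
    (hPa : Pred none = ∅)
    (hPi : ∀ q, Pred (some (false, q)) = ∅)
    (hPj : ∀ q, Pred (some (true, q)) = {none, some (false, q)})
    (Cs : Option (Bool × Fin m) → ℝ)
    (hCa : Cs none = 3 * m / 2 + 1)
    (hCi : ∀ q : Fin m, Cs (some (false, q)) = (q : ℕ) + 2)
    (hCj : ∀ q : Fin m, Cs (some (true, q)) = 1) :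
    IsLeast
      {v : ℝ | ∃ σ : Option (Bool × Fin m) ≃ Fin (Fintype.card (Option (Bool × Fin m))),
        (∀ j, (Pred j).Nonempty → ∃ i ∈ Pred j, σ i < σ j) ∧
        v = ∑ q : Fin m,
          ∑ i ∈ Finset.univ.filter (fun i => σ i ≤ σ (some (true, q))), p i}
      ((m : ℝ) ^ 2 / 2) ∧
    (∀ (k : Option (Bool × Fin m)) (S : Finset (Option (Bool × Fin m))),
      ((∑ j ∈ S, p j) + minChain13 Pred p S k) ^ 2 / 2 +
        ((∑ j ∈ S, p j ^ 2) + minChain13 Pred p S k ^ 2) / 2 ≤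
      ∑ j ∈ S, p j * Cs j + minChain13 Pred p S k * Cs k) ∧
    (∑ q : Fin m, Cs (some (true, q)) = m) := by
  refine ⟨⟨memb13 m hm p hpa hpi hpj Pred hPa hPi hPj, ?_⟩,
    ineq13 m hm p hpa hpi hpj Pred hPa hPi hPj Cs hCa hCi hCj, ?_⟩
  · rintro v ⟨σ, hfeas, rfl⟩
    exact lower13 m hm p hpa hpi hpj Pred hPa hPi hPj σ hfeas
  · simp [hCj]
end
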